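/- Let f be an ergodic p.m.p. action of the countable group Γ on a standard Borel probability space (X, μ), and let K be a compact metrizable space. If f is strongly ergodic, then the weak* closure of E(f, K) is contained in E(Γ, K), the set of ergodic Γ-invariant Borel probability measures on K^Γ. -/

import Mathlib

open MeasureTheory Filter Topology

/-- A probability-measure-preserving action of a group `Γ` on `(X, μ)`. -/
def IsPMPAction {Γ X : Type*} [Group Γ] [MeasurableSpace X]
    (f : Γ → X → X) (μ : Measure X) : Prop :=
  (∀ γ : Γ, MeasurePreserving (f γ) μ μ) ∧ (∀ x : X, f 1 x = x) ∧
    (∀ γ₁ γ₂ : Γ, ∀ x : X, f (γ₁ * γ₂) x = f γ₁ (f γ₂ x))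

/-- The action is (essentially) free. -/
def IsFreeAction {Γ X : Type*} [MeasurableSpace X]
    (f : Γ → X → X) (μ : Measure X) : Prop :=
  ∀ᵐ x ∂μ, ∀ γ γ' : Γ, γ ≠ γ' → f γ x ≠ f γ' x

/-- `f` (acting on `(X, μ)`) weakly contains `g` (acting on `(Y, ν)`). -/
def WeaklyContains {Γ X Y : Type*} [MeasurableSpace X] [MeasurableSpace Y]
    (f : Γ → X → X) (μ : Measure X) (g : Γ → Y → Y) (ν : Measure Y) : Prop :=
  ∀ (n : ℕ) (Ys : Fin n → Set Y), (∀ i, MeasurableSet (Ys i)) →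
    ∀ (S : Finset Γ) (ε : ℝ), 0 < ε →
      ∃ Xs : Fin n → Set X, (∀ i, MeasurableSet (Xs i)) ∧
        ∀ i j : Fin n, ∀ γ ∈ S,
          |(μ (f γ '' Xs i ∩ Xs j)).toReal - (ν (g γ '' Ys i ∩ Ys j)).toReal| < ε

/-- The (left) shift action of `Γ` on `Γ → κ`. -/
def bernoulliShift {Γ κ : Type*} [Group Γ] (γ : Γ) (ω : Γ → κ) : Γ → κ :=
  fun δ => ω (δ * γ)

/-- `ν` is the product (Bernoulli) measure on `Γ → κ` with one-dimensional marginal `κm`: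
it is a probability measure giving every cylinder set the product of the marginals. -/
def IsBernoulliMeasure {Γ κ : Type*} [MeasurableSpace κ]
    (κm : Measure κ) (ν : Measure (Γ → κ)) : Prop :=
  IsProbabilityMeasure ν ∧
    ∀ (F : Finset Γ) (B : Γ → Set κ), (∀ γ, MeasurableSet (B γ)) →
      ν {ω | ∀ γ ∈ F, ω γ ∈ B γ} = ∏ γ ∈ F, κm (B γ)

/-- The action `f` is ergodic: every invariant Borel set is null or conull. -/
def IsErgodicAction {Γ X : Type*} [MeasurableSpace X]
    (f : Γ → X → X) (μ : Measure X) : Prop :=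
  ∀ A : Set X, MeasurableSet A → (∀ γ : Γ, f γ ⁻¹' A = A) → μ A = 0 ∨ μ A = 1

/-- A sequence of Borel sets `A n` is almost invariant:
`μ (f_γ A_n ∆ A_n) → 0` for every `γ`. -/
def AlmostInvariantSeq {Γ X : Type*} [MeasurableSpace X]
    (f : Γ → X → X) (μ : Measure X) (A : ℕ → Set X) : Prop :=
  ∀ γ : Γ, Tendsto (fun n => μ (symmDiff (f γ '' A n) (A n))) atTop (nhds 0)

/-- A sequence of sets `A n` is trivial: `μ(A_n)(1 - μ(A_n)) → 0`. -/
def TrivialSeq {X : Type*} [MeasurableSpace X] (μ : Measure X) (A : ℕ → Set X) : Prop :=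
  Tendsto (fun n => μ (A n) * (1 - μ (A n))) atTop (nhds 0)

/-- The action `f` is strongly ergodic: it is ergodic and every almost invariant sequence of
Borel sets is trivial. -/
def IsStronglyErgodic {Γ X : Type*} [MeasurableSpace X]
    (f : Γ → X → X) (μ : Measure X) : Prop :=
  IsErgodicAction f μ ∧
    ∀ A : ℕ → Set X, (∀ n, MeasurableSet (A n)) →
      AlmostInvariantSeq f μ A → TrivialSeq μ A

open TopologicalSpace in
/-- `E(f, K)`: the set of invariant measures on `K^Γ` obtained as pushforwards `Φ∘μ` of `μ`
under maps `Φ(x)(γ) = φ(f_γ x)` for Borel `φ : X → K`. -/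
def EClass {Γ X : Type*} (K : Type*) [Group Γ] [MeasurableSpace X] [TopologicalSpace K]
    [MeasurableSpace K] (f : Γ → X → X) (μ : Measure X) [IsProbabilityMeasure μ] :
    Set (ProbabilityMeasure (Γ → K)) :=
  {ρ | ∃ φ : X → K, Measurable φ ∧
    (ρ : Measure (Γ → K)) = μ.map (fun x => fun γ : Γ => φ (f γ x))}

open TopologicalSpace in
/-- `E(Γ, K)`: the set of ergodic shift-invariant Borel probability measures on `K^Γ`. -/
def ErgodicInvariantMeasures (Γ K : Type*) [Group Γ] [TopologicalSpace K]
    [MeasurableSpace K] : Set (ProbabilityMeasure (Γ → K)) :=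
  {ρ | (∀ γ : Γ, MeasurePreserving (bernoulliShift γ) (ρ : Measure (Γ → K)) ρ) ∧
      IsErgodicAction (bernoulliShift (Γ := Γ) (κ := K)) (ρ : Measure (Γ → K))}

open scoped ENNReal BoundedContinuousFunction
open Set

lemma key_ineq (a b : ℝ) (ha0 : 0 ≤ a) (ha1 : a ≤ 1) (hb0 : 0 ≤ b) (hb1 : b ≤ 1)
    (h : (1/2 ≤ a ∧ ¬ (1/2:ℝ) ≤ b) ∨ ((1/2:ℝ) ≤ b ∧ ¬ (1/2:ℝ) ≤ a)) :
    1 ≤ 4*(a-b)*(a-b) + 4*(a-a*a) + 4*(b-b*b) := by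
  rcases h with ⟨h1, h2⟩ | ⟨h1, h2⟩
  · push_neg at h2
    nlinarith [mul_nonneg (by linarith : (0:ℝ) ≤ a - 1/2) (by linarith : (0:ℝ) ≤ 1 - 2*b)]
  · push_neg at h2
    nlinarith [mul_nonneg (by linarith : (0:ℝ) ≤ b - 1/2) (by linarith : (0:ℝ) ≤ 1 - 2*a)]

lemma aux_ind_sub (t χ : ℝ) (h0 : 0 ≤ t) (h1 : t ≤ 1) (hχ : χ = 0 ∨ χ = 1) :
    t - t*t ≤ |t - χ| := by
  rcases hχ with h | h <;> subst h
  · rw [sub_zero, abs_of_nonneg h0]; nlinarith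
  · rw [abs_of_nonpos (by linarith)]; nlinarith

lemma aux_half (t ind : ℝ) (h0 : 0 ≤ t) (h1 : t ≤ 1)
    (hind : ((1/2:ℝ) ≤ t ∧ ind = 1) ∨ (¬ (1/2:ℝ) ≤ t ∧ ind = 0)) :
    |ind - t| ≤ 2*(t - t*t) := by
  rcases hind with ⟨h, h'⟩ | ⟨h, h'⟩ <;> subst h'
  · rw [abs_of_nonneg (by linarith)]; nlinarith
  · push_neg at h; rw [zero_sub, abs_neg, abs_of_nonneg h0]; nlinarith

lemma integrable_bdd {α : Type*} [MeasurableSpace α] (ν : Measure α) [IsFiniteMeasure ν]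
    {g : α → ℝ} (hg : Measurable g) {C : ℝ} (h : ∀ x, |g x| ≤ C) : Integrable g ν :=
  ⟨hg.aestronglyMeasurable, HasFiniteIntegral.of_bounded (C := C)
    (ae_of_all _ (by simpa [Real.norm_eq_abs] using h))⟩

lemma exists_bcf_approx {Ω : Type*} [TopologicalSpace Ω] [NormalSpace Ω] [MeasurableSpace Ω]
    [OpensMeasurableSpace Ω] (ν : Measure Ω) [IsProbabilityMeasure ν] [ν.WeaklyRegular]
    {A : Set Ω} (hA : MeasurableSet A) {ε : ℝ} (hε : 0 < ε) :
    ∃ F : Ω →ᵇ ℝ, (∀ x, F x ∈ Set.Icc (0:ℝ) 1) ∧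
      ∫ x, |F x - A.indicator 1 x| ∂ν ≤ ε := by
  have hAne : ν A ≠ ∞ := measure_ne_top ν A
  have hε2 : (ENNReal.ofReal (ε/2)) ≠ 0 := by
    simp [ENNReal.ofReal_eq_zero]; linarith
  obtain ⟨U, hAU, hUo, hU⟩ := A.exists_isOpen_lt_add hAne hε2
  obtain ⟨C, hCA, hCc, hC⟩ := hA.exists_isClosed_lt_add hAne hε2
  have hdisj : Disjoint Uᶜ C := Set.disjoint_left.mpr fun x hx hxC => hx (hAU (hCA hxC))
  obtain ⟨g, hg0, hg1, hg01⟩ :=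
    exists_continuous_zero_one_of_isClosed hUo.isClosed_compl hCc hdisj
  set F : Ω →ᵇ ℝ := BoundedContinuousFunction.ofNormedAddCommGroup g g.continuous 1
    (fun x => by rw [Real.norm_eq_abs, abs_of_nonneg (hg01 x).1]; exact (hg01 x).2) with hFdef
  have hFx : ∀ x, F x = g x := fun x => rfl
  refine ⟨F, fun x => by rw [hFx]; exact hg01 x, ?_⟩
  have hpt : ∀ x, |F x - A.indicator 1 x| ≤ (U \ C).indicator (1 : Ω → ℝ) x := by
    intro x
    by_cases hxC : x ∈ C
    · have h1 : F x = 1 := hg1 hxC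
      have h2 : A.indicator (1 : Ω → ℝ) x = 1 := Set.indicator_of_mem (hCA hxC) 1
      rw [h1, h2, sub_self, abs_zero]
      exact Set.indicator_nonneg (fun _ _ => zero_le_one) x
    · by_cases hxU : x ∈ U
      · have hx1 : |F x - A.indicator 1 x| ≤ 1 := by
          rcases hg01 x with ⟨hl, hr⟩
          rw [hFx]
          by_cases hxA : x ∈ A <;> simp [Set.indicator_of_mem, hxA, abs_le] <;> constructor <;> linarith
        simpa [Set.indicator_of_mem (Set.mem_diff_of_mem hxU hxC)] using hx1
      · have hF0 : F x = 0 := hg0 hxU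
        have hxA : x ∉ A := fun h => hxU (hAU h)
        simp [hF0, Set.indicator_of_notMem hxA, Set.indicator_apply, hxC, hxU]
  have hint1 : Integrable (fun x => |F x - A.indicator 1 x|) ν :=
    ((F.integrable ν).sub ((integrable_const (1:ℝ)).indicator hA)).abs
  have hint2 : Integrable ((U \ C).indicator (1 : Ω → ℝ)) ν :=
    (integrable_const (1:ℝ)).indicator (hUo.measurableSet.diff hCc.measurableSet)
  calc ∫ x, |F x - A.indicator 1 x| ∂ν ≤ ∫ x, (U \ C).indicator (1 : Ω → ℝ) x ∂ν :=
        integral_mono hint1 hint2 hpt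
    _ = (ν (U \ C)).toReal := by
        rw [integral_indicator_one (hUo.measurableSet.diff hCc.measurableSet), measureReal_def]
    _ ≤ ε := by
        have hsub : U \ C ⊆ (U \ A) ∪ (A \ C) := by
          intro x ⟨hxU, hxC⟩
          by_cases hxA : x ∈ A
          · exact Or.inr ⟨hxA, hxC⟩
          · exact Or.inl ⟨hxU, hxA⟩
        have h1 : ν (U \ A) ≤ ENNReal.ofReal (ε/2) := by
          rw [measure_diff hAU hA.nullMeasurableSet hAne]
          exact tsub_le_iff_left.mpr hU.le
        have h2 : ν (A \ C) ≤ ENNReal.ofReal (ε/2) := by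
          rw [measure_diff hCA hCc.measurableSet.nullMeasurableSet (measure_ne_top ν C)]
          exact tsub_le_iff_left.mpr hC.le
        have : ν (U \ C) ≤ ENNReal.ofReal ε := by
          calc ν (U \ C) ≤ ν ((U \ A) ∪ (A \ C)) := measure_mono hsub
            _ ≤ ν (U \ A) + ν (A \ C) := measure_union_le _ _
            _ ≤ ENNReal.ofReal (ε/2) + ENNReal.ofReal (ε/2) := add_le_add h1 h2
            _ = ENNReal.ofReal ε := by
                rw [← ENNReal.ofReal_add (by linarith) (by linarith)]; norm_num
        exact ENNReal.toReal_le_of_le_ofReal hε.le this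
lemma aux_sq (a b c : ℝ) (ha0 : 0 ≤ a) (ha1 : a ≤ 1) (hb0 : 0 ≤ b) (hb1 : b ≤ 1) :
    (a - b) * (a - b) ≤ |a - c| + |c - b| := by
  have h1 : |a - b| ≤ 1 := abs_le.mpr ⟨by linarith, by linarith⟩
  have h2 : (a - b) * (a - b) = |a - b| * |a - b| := (abs_mul_abs_self _).symm
  calc (a - b) * (a - b) = |a - b| * |a - b| := h2
    _ ≤ |a - b| * 1 := mul_le_mul_of_nonneg_left h1 (abs_nonneg _)
    _ = |a - b| := mul_one _
    _ ≤ |a - c| + |c - b| := abs_sub_le a c b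

set_option maxHeartbeats 2000000 in
open TopologicalSpace in
/-- If `f` is strongly ergodic then the weak* closure of `E(f,K)` consists of ergodic
invariant measures. -/
theorem closure_EClass_subset_ergodic_of_stronglyErgodic
    {Γ : Type} [Group Γ] [Countable Γ]
    {X : Type} [MeasurableSpace X] [StandardBorelSpace X]
    (μ : Measure X) [IsProbabilityMeasure μ]
    (f : Γ → X → X) (hf : IsPMPAction f μ) (hse : IsStronglyErgodic f μ)
    (K : Type) [TopologicalSpace K] [CompactSpace K] [MetrizableSpace K]
    [SecondCountableTopology K] [MeasurableSpace K] [BorelSpace K] :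
    closure (EClass K f μ) ⊆ ErgodicInvariantMeasures Γ K := by
  intro ρ hρ
  have shift_cont : ∀ δ : Γ, Continuous (bernoulliShift (Γ := Γ) (κ := K) δ) :=
    fun δ => continuous_pi fun i => continuous_apply (i * δ)
  have shift_meas : ∀ δ : Γ, Measurable (bernoulliShift (Γ := Γ) (κ := K) δ) :=
    fun δ => (shift_cont δ).measurable
  -- every element of `EClass` is shift invariant
  have hEinv : ∀ ρ' : ProbabilityMeasure (Γ → K), ρ' ∈ EClass K f μ → ∀ δ : Γ,
      Measure.map (bernoulliShift δ) (ρ' : Measure (Γ → K)) = (ρ' : Measure (Γ → K)) := by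
    rintro ρ' ⟨φ, hφ, hmap⟩ δ
    have hΦ : Measurable (fun x => fun γ : Γ => φ (f γ x)) :=
      measurable_pi_lambda _ fun γ => hφ.comp (hf.1 γ).measurable
    rw [hmap, Measure.map_map (shift_meas δ) hΦ]
    have hcomm : (bernoulliShift δ) ∘ (fun x => fun γ : Γ => φ (f γ x))
        = (fun x => fun γ : Γ => φ (f γ x)) ∘ f δ := by
      funext x
      funext γ
      simp only [Function.comp_apply, bernoulliShift]
      rw [← hf.2.2]
    rw [hcomm, ← Measure.map_map hΦ (hf.1 δ).measurable, (hf.1 δ).map_eq]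
  -- the limit measure is shift invariant
  have hρinv : ∀ δ : Γ, Measure.map (bernoulliShift δ) (ρ : Measure (Γ → K)) = ρ := by
    intro δ
    have hcl : IsClosed {ν : ProbabilityMeasure (Γ → K) |
        ν.map (shift_cont δ).measurable.aemeasurable = ν} :=
      isClosed_eq (ProbabilityMeasure.continuous_map (shift_cont δ)) continuous_id
    have hsub : EClass K f μ ⊆ {ν : ProbabilityMeasure (Γ → K) |
        ν.map (shift_cont δ).measurable.aemeasurable = ν} := by
      intro ρ' hρ'
      apply ProbabilityMeasure.toMeasure_injective
      rw [ProbabilityMeasure.toMeasure_map]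
      exact hEinv ρ' hρ' δ
    have hmem := closure_minimal hsub hcl hρ
    have h2 := congrArg ProbabilityMeasure.toMeasure hmem
    rwa [ProbabilityMeasure.toMeasure_map] at h2
  refine ⟨fun δ => ⟨shift_meas δ, hρinv δ⟩, ?_⟩
  -- ergodicity
  intro A hA hinvA
  by_contra hcon
  push_neg at hcon
  obtain ⟨h0, h1⟩ := hcon
  set ar : ℝ := ((ρ : Measure (Γ → K)) A).toReal with har
  have har0 : 0 < ar := ENNReal.toReal_pos h0 (measure_ne_top _ A)
  have har1 : ar < 1 := by
    have hlt : (ρ : Measure (Γ → K)) A < 1 := lt_of_le_of_ne prob_le_one h1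
    have := (ENNReal.toReal_lt_toReal (measure_ne_top _ A) ENNReal.one_ne_top).mpr hlt
    simpa using this
  obtain ⟨e, he⟩ := exists_surjective_nat Γ
  -- generic facts
  have hχ01 : ∀ ω : Γ → K, A.indicator (1 : (Γ → K) → ℝ) ω = 0 ∨
      A.indicator (1 : (Γ → K) → ℝ) ω = 1 := by
    intro ω
    by_cases h : ω ∈ A
    · right; simp [Set.indicator_of_mem h]
    · left; simp [Set.indicator_of_notMem h]
  have hχmeas : Measurable (A.indicator (1 : (Γ → K) → ℝ)) := measurable_one.indicator hA
  have hχshift : ∀ (δ : Γ) (ω : Γ → K),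
      A.indicator (1 : (Γ → K) → ℝ) (bernoulliShift δ ω) = A.indicator (1 : (Γ → K) → ℝ) ω := by
    intro δ ω
    have hmem : bernoulliShift δ ω ∈ A ↔ ω ∈ A := by
      conv_rhs => rw [← hinvA δ]
      exact Iff.rfl
    by_cases h : ω ∈ A
    · rw [Set.indicator_of_mem (hmem.mpr h), Set.indicator_of_mem h]
      rfl
    · rw [Set.indicator_of_notMem (fun hc => h (hmem.mp hc)), Set.indicator_of_notMem h]
  have hmapinv : ∀ (ν₀ : Measure (Γ → K)) (δ : Γ),
      Measure.map (bernoulliShift δ) ν₀ = ν₀ → ∀ g : (Γ → K) → ℝ, Measurable g →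
      ∫ ω, g (bernoulliShift δ ω) ∂ν₀ = ∫ ω, g ω ∂ν₀ := by
    intro ν₀ δ hinv g hg
    conv_rhs => rw [← hinv]
    rw [integral_map (shift_meas δ).aemeasurable hg.aestronglyMeasurable]
  have himg : ∀ (γ : Γ) (Bs : Set X), f γ '' Bs = f γ⁻¹ ⁻¹' Bs := by
    intro γ Bs
    ext x
    constructor
    · rintro ⟨y, hy, rfl⟩
      have hy' : f γ⁻¹ (f γ y) = y := by rw [← hf.2.2, inv_mul_cancel, hf.2.1]
      simpa [Set.mem_preimage, hy'] using hy
    · intro hx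
      exact ⟨f γ⁻¹ x, hx, by rw [← hf.2.2, mul_inv_cancel, hf.2.1]⟩
  -- the main approximation step
  have step : ∀ m : ℕ, ∃ B : Set X, MeasurableSet B ∧
      |(μ B).toReal - ar| ≤ 6 * (1 / ((m : ℝ) + 1)) ∧
      ∀ j ≤ m, μ (symmDiff (f ((e j)⁻¹) '' B) B) ≤
        ENNReal.ofReal (28 * (1 / ((m : ℝ) + 1))) := by
    intro m
    set ε : ℝ := 1 / ((m : ℝ) + 1) with hεdef
    have hε : 0 < ε := by positivity
    obtain ⟨F, hF01, hFA⟩ := exists_bcf_approx (ρ : Measure (Γ → K)) hA hε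
    have hF0 : ∀ ω, 0 ≤ F ω := fun ω => (hF01 ω).1
    have hF1 : ∀ ω, F ω ≤ 1 := fun ω => (hF01 ω).2
    set G1 : (Γ → K) →ᵇ ℝ := F - F * F with hG1def
    have hG1x : ∀ ω, G1 ω = F ω - F ω * F ω := fun ω => rfl
    set Tc : ℕ → C(Γ → K, Γ → K) := fun j => ⟨bernoulliShift (e j), shift_cont (e j)⟩ with hTcdef
    set H : ℕ → ((Γ → K) →ᵇ ℝ) :=
      fun j => (F.compContinuous (Tc j) - F) * (F.compContinuous (Tc j) - F) with hHdef
    have hHx : ∀ j ω, H j ω =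
        (F (bernoulliShift (e j) ω) - F ω) * (F (bernoulliShift (e j) ω) - F ω) :=
      fun j ω => rfl
    -- a weak-star neighbourhood of ρ
    have hopen : ∀ (G : (Γ → K) →ᵇ ℝ) (c : ℝ),
        IsOpen {ν' : ProbabilityMeasure (Γ → K) |
          |∫ ω, G ω ∂(ν' : Measure (Γ → K)) - c| < ε} := by
      intro G c
      have hcont : Continuous fun ν' : ProbabilityMeasure (Γ → K) =>
          |∫ ω, G ω ∂(ν' : Measure (Γ → K)) - c| :=
        ((ProbabilityMeasure.continuous_integral_boundedContinuousFunction G).sub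
          continuous_const).abs
      exact isOpen_Iio.preimage hcont
    set V : Set (ProbabilityMeasure (Γ → K)) :=
      {ν' | |∫ ω, F ω ∂(ν' : Measure (Γ → K)) - ∫ ω, F ω ∂(ρ : Measure (Γ → K))| < ε} ∩
      ({ν' | |∫ ω, G1 ω ∂(ν' : Measure (Γ → K)) - ∫ ω, G1 ω ∂(ρ : Measure (Γ → K))| < ε} ∩
       ⋂ j ∈ Finset.range (m + 1),
         {ν' | |∫ ω, H j ω ∂(ν' : Measure (Γ → K)) - ∫ ω, H j ω ∂(ρ : Measure (Γ → K))| < ε})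
      with hVdef
    have hVopen : IsOpen V :=
      (hopen F _).inter ((hopen G1 _).inter
        (isOpen_biInter_finset fun j _ => hopen (H j) _))
    have hρV : ρ ∈ V := by
      refine ⟨by simpa using hε, by simpa using hε, ?_⟩
      exact Set.mem_iInter₂.mpr fun j _ => by simpa using hε
    obtain ⟨ρ', hρ'V, hρ'E⟩ := _root_.mem_closure_iff.mp hρ V hVopen hρV
    obtain ⟨φ, hφ, hmap⟩ := hρ'E
    set Φ : X → (Γ → K) := fun x => fun γ : Γ => φ (f γ x) with hΦdef
    have hΦ : Measurable Φ := measurable_pi_lambda _ fun γ => hφ.comp (hf.1 γ).measurable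
    have hinv' : ∀ δ : Γ,
        Measure.map (bernoulliShift δ) (ρ' : Measure (Γ → K)) = (ρ' : Measure (Γ → K)) :=
      hEinv ρ' ⟨φ, hφ, hmap⟩
    set S : Set (Γ → K) := {ω | (1/2 : ℝ) ≤ F ω} with hSdef
    have hS : MeasurableSet S := measurableSet_le measurable_const F.continuous.measurable
    set B : Set X := Φ ⁻¹' S with hBdef
    have hBmeas : MeasurableSet B := hΦ hS
    have hμB : μ B = (ρ' : Measure (Γ → K)) S := by
      rw [hmap, Measure.map_apply hΦ hS]
    -- integrability of the auxiliary functions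
    have hhabs_meas : Measurable (fun ω => |F ω - A.indicator (1 : (Γ → K) → ℝ) ω|) :=
      (F.continuous.measurable.sub hχmeas).abs
    have hhabs_bd : ∀ ω, |(fun ω => |F ω - A.indicator (1 : (Γ → K) → ℝ) ω|) ω| ≤ 1 := by
      intro ω
      rw [abs_abs]
      rcases hχ01 ω with h | h
      · rw [h, sub_zero, abs_of_nonneg (hF0 ω)]; exact hF1 ω
      · rw [h, abs_of_nonpos (by linarith [hF1 ω])]; linarith [hF0 ω]
    -- estimates against ρ
    have hintχ : ∫ ω, A.indicator (1 : (Γ → K) → ℝ) ω ∂(ρ : Measure (Γ → K)) = ar :=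
      integral_indicator_one hA
    have hχint : Integrable (A.indicator (1 : (Γ → K) → ℝ)) (ρ : Measure (Γ → K)) :=
      (integrable_const (1 : ℝ)).indicator hA
    have r0 : |∫ ω, F ω ∂(ρ : Measure (Γ → K)) - ar| ≤ ε := by
      rw [← hintχ, ← integral_sub (F.integrable _) hχint]
      calc |∫ ω, (F ω - A.indicator (1 : (Γ → K) → ℝ) ω) ∂(ρ : Measure (Γ → K))|
          ≤ ∫ ω, |F ω - A.indicator (1 : (Γ → K) → ℝ) ω| ∂(ρ : Measure (Γ → K)) := by
            simpa [Real.norm_eq_abs] using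
              norm_integral_le_integral_norm
                (fun ω => F ω - A.indicator (1 : (Γ → K) → ℝ) ω)
                (μ := (ρ : Measure (Γ → K)))
        _ ≤ ε := hFA
    have r1 : ∫ ω, G1 ω ∂(ρ : Measure (Γ → K)) ≤ ε := by
      calc ∫ ω, G1 ω ∂(ρ : Measure (Γ → K))
          ≤ ∫ ω, |F ω - A.indicator (1 : (Γ → K) → ℝ) ω| ∂(ρ : Measure (Γ → K)) := by
            refine integral_mono (G1.integrable _)
              (integrable_bdd _ hhabs_meas hhabs_bd) fun ω => ?_
            rw [hG1x]
            exact aux_ind_sub (F ω) _ (hF0 ω) (hF1 ω) (hχ01 ω)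
        _ ≤ ε := hFA
    have r2 : ∀ j : ℕ, ∫ ω, H j ω ∂(ρ : Measure (Γ → K)) ≤ 2 * ε := by
      intro j
      have hshiftint : ∫ ω, |F (bernoulliShift (e j) ω) -
            A.indicator (1 : (Γ → K) → ℝ) (bernoulliShift (e j) ω)| ∂(ρ : Measure (Γ → K))
          = ∫ ω, |F ω - A.indicator (1 : (Γ → K) → ℝ) ω| ∂(ρ : Measure (Γ → K)) :=
        hmapinv _ (e j) (hρinv (e j)) _ hhabs_meas
      have hptH : ∀ ω, H j ω ≤
          |F (bernoulliShift (e j) ω) -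
            A.indicator (1 : (Γ → K) → ℝ) (bernoulliShift (e j) ω)| +
          |F ω - A.indicator (1 : (Γ → K) → ℝ) ω| := by
        intro ω
        rw [hHx]
        have h1 := aux_sq (F (bernoulliShift (e j) ω)) (F ω)
          (A.indicator (1 : (Γ → K) → ℝ) ω) (hF0 _) (hF1 _) (hF0 ω) (hF1 ω)
        rw [hχshift (e j) ω]
        calc (F (bernoulliShift (e j) ω) - F ω) * (F (bernoulliShift (e j) ω) - F ω)
            ≤ |F (bernoulliShift (e j) ω) - A.indicator (1 : (Γ → K) → ℝ) ω| +
              |A.indicator (1 : (Γ → K) → ℝ) ω - F ω| := h1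
          _ = |F (bernoulliShift (e j) ω) - A.indicator (1 : (Γ → K) → ℝ) ω| +
              |F ω - A.indicator (1 : (Γ → K) → ℝ) ω| := by rw [abs_sub_comm (A.indicator _ ω)]
      have hint1 : Integrable (fun ω => |F (bernoulliShift (e j) ω) -
          A.indicator (1 : (Γ → K) → ℝ) (bernoulliShift (e j) ω)|) (ρ : Measure (Γ → K)) :=
        integrable_bdd _ (hhabs_meas.comp (shift_meas (e j)))
          (fun ω => hhabs_bd (bernoulliShift (e j) ω))
      have hint2 : Integrable (fun ω => |F ω - A.indicator (1 : (Γ → K) → ℝ) ω|)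
          (ρ : Measure (Γ → K)) := integrable_bdd _ hhabs_meas hhabs_bd
      calc ∫ ω, H j ω ∂(ρ : Measure (Γ → K))
          ≤ ∫ ω, (|F (bernoulliShift (e j) ω) -
              A.indicator (1 : (Γ → K) → ℝ) (bernoulliShift (e j) ω)| +
              |F ω - A.indicator (1 : (Γ → K) → ℝ) ω|) ∂(ρ : Measure (Γ → K)) :=
            integral_mono ((H j).integrable _) (hint1.add hint2) hptH
        _ = ∫ ω, |F (bernoulliShift (e j) ω) -
              A.indicator (1 : (Γ → K) → ℝ) (bernoulliShift (e j) ω)| ∂(ρ : Measure (Γ → K)) +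
            ∫ ω, |F ω - A.indicator (1 : (Γ → K) → ℝ) ω| ∂(ρ : Measure (Γ → K)) :=
            integral_add hint1 hint2
        _ ≤ 2 * ε := by rw [hshiftint]; linarith [hFA]
    -- transfer the estimates to ρ'
    have b0 : |∫ ω, F ω ∂(ρ' : Measure (Γ → K)) -
        ∫ ω, F ω ∂(ρ : Measure (Γ → K))| < ε := hρ'V.1
    have b1 : |∫ ω, G1 ω ∂(ρ' : Measure (Γ → K)) -
        ∫ ω, G1 ω ∂(ρ : Measure (Γ → K))| < ε := hρ'V.2.1
    have b2 : ∀ j ≤ m, |∫ ω, H j ω ∂(ρ' : Measure (Γ → K)) -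
        ∫ ω, H j ω ∂(ρ : Measure (Γ → K))| < ε := fun j hj =>
      Set.mem_iInter₂.mp hρ'V.2.2 j (Finset.mem_range.mpr (Nat.lt_succ_of_le hj))
    have q0 : |∫ ω, F ω ∂(ρ' : Measure (Γ → K)) - ar| ≤ 2 * ε := by
      have := abs_sub_le (∫ ω, F ω ∂(ρ' : Measure (Γ → K)))
        (∫ ω, F ω ∂(ρ : Measure (Γ → K))) ar
      linarith [b0, r0]
    have q1 : ∫ ω, G1 ω ∂(ρ' : Measure (Γ → K)) ≤ 2 * ε := by
      have := abs_lt.mp b1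
      linarith [r1]
    have q2 : ∀ j ≤ m, ∫ ω, H j ω ∂(ρ' : Measure (Γ → K)) ≤ 3 * ε := by
      intro j hj
      have := abs_lt.mp (b2 j hj)
      linarith [r2 j]
    -- the measure of B is close to ar
    have hindint : Integrable (S.indicator (1 : (Γ → K) → ℝ)) (ρ' : Measure (Γ → K)) :=
      (integrable_const (1 : ℝ)).indicator hS
    have hE1 : |((ρ' : Measure (Γ → K)) S).toReal - ∫ ω, F ω ∂(ρ' : Measure (Γ → K))| ≤
        2 * ∫ ω, G1 ω ∂(ρ' : Measure (Γ → K)) := by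
      rw [← measureReal_def, ← integral_indicator_one (μ := (ρ' : Measure (Γ → K))) hS,
        ← integral_sub hindint (F.integrable _)]
      calc |∫ ω, (S.indicator (1 : (Γ → K) → ℝ) ω - F ω) ∂(ρ' : Measure (Γ → K))|
          ≤ ∫ ω, |S.indicator (1 : (Γ → K) → ℝ) ω - F ω| ∂(ρ' : Measure (Γ → K)) := by
            simpa [Real.norm_eq_abs] using
              norm_integral_le_integral_norm
                (fun ω => S.indicator (1 : (Γ → K) → ℝ) ω - F ω)
                (μ := (ρ' : Measure (Γ → K)))
        _ ≤ ∫ ω, 2 * G1 ω ∂(ρ' : Measure (Γ → K)) := by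
            refine integral_mono
              (integrable_bdd _ ((measurable_one.indicator hS).sub F.continuous.measurable).abs
                (C := 1) (fun ω => ?_))
              ((G1.integrable _).const_mul 2) (fun ω => ?_)
            · rw [abs_abs]
              by_cases h : ω ∈ S
              · rw [Set.indicator_of_mem h]
                simp only [Pi.one_apply]
                rw [abs_le]
                constructor <;> linarith [hF0 ω, hF1 ω]
              · rw [Set.indicator_of_notMem h, zero_sub, abs_neg,
                  abs_of_nonneg (hF0 ω)]
                exact hF1 ω
            · rw [hG1x]
              by_cases h : ω ∈ S
              · rw [Set.indicator_of_mem h]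
                simp only [Pi.one_apply]
                exact aux_half (F ω) 1 (hF0 ω) (hF1 ω) (Or.inl ⟨h, rfl⟩)
              · rw [Set.indicator_of_notMem h]
                exact aux_half (F ω) 0 (hF0 ω) (hF1 ω) (Or.inr ⟨h, rfl⟩)
        _ = 2 * ∫ ω, G1 ω ∂(ρ' : Measure (Γ → K)) := integral_const_mul 2 _
    refine ⟨B, hBmeas, ?_, ?_⟩
    · -- |μ B - ar| ≤ 6ε
      rw [hμB]
      have habs3 := abs_sub_le ((ρ' : Measure (Γ → K)) S).toReal
        (∫ ω, F ω ∂(ρ' : Measure (Γ → K))) ar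
      linarith [hE1, q0, q1]
    · -- almost invariance
      intro j hj
      have himgB : f ((e j)⁻¹) '' B = Φ ⁻¹' (bernoulliShift (e j) ⁻¹' S) := by
        rw [himg, inv_inv]
        have hcomm : Φ ∘ f (e j) = bernoulliShift (e j) ∘ Φ := by
          funext x
          funext γ
          simp only [Function.comp_apply, hΦdef, bernoulliShift]
          rw [← hf.2.2]
        rw [hBdef, ← Set.preimage_comp, hcomm, Set.preimage_comp]
      have hD : MeasurableSet (symmDiff (bernoulliShift (e j) ⁻¹' S) S) :=
        (hS.preimage (shift_meas (e j))).symmDiff hS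
      have hsymm : μ (symmDiff (f ((e j)⁻¹) '' B) B) =
          (ρ' : Measure (Γ → K)) (symmDiff (bernoulliShift (e j) ⁻¹' S) S) := by
        rw [himgB, hBdef, ← Set.preimage_symmDiff, hmap, Measure.map_apply hΦ hD]
      -- pointwise bound on the indicator of the symmetric difference
      have hptD : ∀ ω, (symmDiff (bernoulliShift (e j) ⁻¹' S) S).indicator
          (1 : (Γ → K) → ℝ) ω ≤
          4 * H j ω + (4 * G1 (bernoulliShift (e j) ω) + 4 * G1 ω) := by
        intro ω
        have hHnn : 0 ≤ H j ω := by rw [hHx]; exact mul_self_nonneg _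
        have hG1nn : ∀ ω', 0 ≤ G1 ω' := by
          intro ω'
          rw [hG1x]
          nlinarith [hF0 ω', hF1 ω']
        by_cases h : ω ∈ symmDiff (bernoulliShift (e j) ⁻¹' S) S
        · rw [Set.indicator_of_mem h]
          have hmem := Set.mem_symmDiff.mp h
          simp only [Set.mem_preimage, hSdef, Set.mem_setOf_eq] at hmem
          have hk := key_ineq (F (bernoulliShift (e j) ω)) (F ω) (hF0 _) (hF1 _)
            (hF0 ω) (hF1 ω) (by tauto)
          rw [hHx, hG1x, hG1x]
          simp only [Pi.one_apply]
          nlinarith [hk]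
        · rw [Set.indicator_of_notMem h]
          have hg1 := hG1nn (bernoulliShift (e j) ω)
          have hg2 := hG1nn ω
          linarith
      have hintH : Integrable (fun ω => 4 * H j ω) (ρ' : Measure (Γ → K)) :=
        ((H j).integrable _).const_mul 4
      have hintG1T : Integrable (fun ω => 4 * G1 (bernoulliShift (e j) ω))
          (ρ' : Measure (Γ → K)) :=
        ((G1.compContinuous (Tc j)).integrable _).const_mul 4
      have hintG1 : Integrable (fun ω => 4 * G1 ω) (ρ' : Measure (Γ → K)) :=
        (G1.integrable _).const_mul 4
      have hsum : Integrable (fun ω => 4 * G1 (bernoulliShift (e j) ω) + 4 * G1 ω)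
          (ρ' : Measure (Γ → K)) := hintG1T.add hintG1
      have hbound : ((ρ' : Measure (Γ → K))
          (symmDiff (bernoulliShift (e j) ⁻¹' S) S)).toReal ≤
          4 * ∫ ω, H j ω ∂(ρ' : Measure (Γ → K)) +
          (4 * ∫ ω, G1 (bernoulliShift (e j) ω) ∂(ρ' : Measure (Γ → K)) +
           4 * ∫ ω, G1 ω ∂(ρ' : Measure (Γ → K))) := by
        rw [← measureReal_def, ← integral_indicator_one (μ := (ρ' : Measure (Γ → K))) hD]
        calc ∫ ω, (symmDiff (bernoulliShift (e j) ⁻¹' S) S).indicator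
              (1 : (Γ → K) → ℝ) ω ∂(ρ' : Measure (Γ → K))
            ≤ ∫ ω, (4 * H j ω + (4 * G1 (bernoulliShift (e j) ω) + 4 * G1 ω))
                ∂(ρ' : Measure (Γ → K)) :=
              integral_mono ((integrable_const (1 : ℝ)).indicator hD)
                (hintH.add (hintG1T.add hintG1)) hptD
          _ = ∫ ω, 4 * H j ω ∂(ρ' : Measure (Γ → K)) +
              ∫ ω, (4 * G1 (bernoulliShift (e j) ω) + 4 * G1 ω) ∂(ρ' : Measure (Γ → K)) :=
              integral_add hintH hsum
          _ = ∫ ω, 4 * H j ω ∂(ρ' : Measure (Γ → K)) +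
              (∫ ω, 4 * G1 (bernoulliShift (e j) ω) ∂(ρ' : Measure (Γ → K)) +
               ∫ ω, 4 * G1 ω ∂(ρ' : Measure (Γ → K))) := by
              congr 1
              exact integral_add hintG1T hintG1
          _ = 4 * ∫ ω, H j ω ∂(ρ' : Measure (Γ → K)) +
              (4 * ∫ ω, G1 (bernoulliShift (e j) ω) ∂(ρ' : Measure (Γ → K)) +
               4 * ∫ ω, G1 ω ∂(ρ' : Measure (Γ → K))) := by
              rw [integral_const_mul, integral_const_mul, integral_const_mul]
      have hG1T : ∫ ω, G1 (bernoulliShift (e j) ω) ∂(ρ' : Measure (Γ → K)) =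
          ∫ ω, G1 ω ∂(ρ' : Measure (Γ → K)) :=
        hmapinv _ (e j) (hinv' (e j)) _ G1.continuous.measurable
      rw [hsymm]
      refine (ENNReal.le_ofReal_iff_toReal_le (measure_ne_top _ _) (by positivity)).mpr ?_
      rw [hG1T] at hbound
      linarith [hbound, q2 j hj, q1]
  -- extract the sequence and contradict strong ergodicity
  choose B hBmeas hBar hBsym using step
  have hAI : AlmostInvariantSeq f μ B := by
    intro γ
    obtain ⟨j, hj⟩ := he γ⁻¹
    have hγ : (e j)⁻¹ = γ := by rw [hj, inv_inv]
    have h28 : Tendsto (fun m : ℕ => ENNReal.ofReal (28 * (1 / ((m : ℝ) + 1))))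
        atTop (𝓝 0) := by
      have h0' : Tendsto (fun m : ℕ => (28 : ℝ) * (1 / ((m : ℝ) + 1))) atTop (𝓝 0) := by
        simpa using tendsto_one_div_add_atTop_nhds_zero_nat.const_mul (28 : ℝ)
      have := (ENNReal.continuous_ofReal.tendsto 0).comp h0'
      simpa [Function.comp_def] using this
    refine tendsto_of_tendsto_of_tendsto_of_le_of_le' tendsto_const_nhds h28
      (Eventually.of_forall fun m => zero_le) ?_
    refine Filter.eventually_atTop.mpr ⟨j, fun m hm => ?_⟩
    rw [← hγ]
    exact hBsym m j hm
  have hTS := hse.2 B hBmeas hAI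
  have htlim : Tendsto (fun n => (μ (B n)).toReal) atTop (𝓝 ar) := by
    have hsq : Tendsto (fun n => (μ (B n)).toReal - ar) atTop (𝓝 0) := by
      refine squeeze_zero_norm (a := fun n : ℕ => 6 * (1 / ((n : ℝ) + 1))) (fun n => ?_) ?_
      · simpa [Real.norm_eq_abs] using hBar n
      · simpa using tendsto_one_div_add_atTop_nhds_zero_nat.const_mul (6 : ℝ)
    have := hsq.add_const ar
    simpa using this
  have hprod1 : Tendsto (fun n => (μ (B n)).toReal * (1 - (μ (B n)).toReal)) atTop
      (𝓝 (ar * (1 - ar))) := htlim.mul (tendsto_const_nhds.sub htlim)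
  have heq : ∀ n, (μ (B n) * (1 - μ (B n))).toReal =
      (μ (B n)).toReal * (1 - (μ (B n)).toReal) := by
    intro n
    rw [ENNReal.toReal_mul, ENNReal.toReal_sub_of_le prob_le_one ENNReal.one_ne_top,
      ENNReal.toReal_one]
  have hprod0 : Tendsto (fun n => (μ (B n)).toReal * (1 - (μ (B n)).toReal)) atTop (𝓝 0) := by
    have h' := (ENNReal.tendsto_toReal (a := 0) (by simp)).comp hTS
    simp only [Function.comp_def, ENNReal.toReal_zero] at h'
    simpa [heq] using h'
  have hzero := tendsto_nhds_unique hprod1 hprod0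
  nlinarith [hzero, har0, har1]
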